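/- Let E ⊂ S be closed satisfying Σ_s for some s < n. Then there is C > 0 so that for every x ∈ S and 0 < R ≤ 1, ∫_{B(x,R)} log(1/d(z,E)) dσ(z) ≤ σ(B(x,R)) log(1/R) + C R^n. -/

import Mathlib

open MeasureTheory

noncomputable def dNI {n : ℕ} (x y : EuclideanSpace ℂ (Fin n)) : ℝ :=
  ‖1 - (inner ℂ y x : ℂ)‖

noncomputable def dE {n : ℕ} (E : Set (EuclideanSpace ℂ (Fin n)))
    (z : EuclideanSpace ℂ (Fin n)) : ℝ :=
  sInf (dNI z '' E)

def Sball {n : ℕ} (x : EuclideanSpace ℂ (Fin n)) (r : ℝ) :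
    Set (EuclideanSpace ℂ (Fin n)) :=
  {z | ‖z‖ = 1 ∧ dNI x z < r}

section aux

variable {n : ℕ} {E : Set (EuclideanSpace ℂ (Fin n))}

lemma dNI_nonneg (x y : EuclideanSpace ℂ (Fin n)) : 0 ≤ dNI x y :=
  norm_nonneg _

lemma bddBelow_dNI (z : EuclideanSpace ℂ (Fin n)) : BddBelow (dNI z '' E) :=
  ⟨0, fun _ ⟨y, _, hy⟩ => hy ▸ dNI_nonneg z y⟩

lemma dE_nonneg (z : EuclideanSpace ℂ (Fin n)) : 0 ≤ dE E z :=
  Real.sInf_nonneg fun _ ⟨y, _, hy⟩ => hy ▸ dNI_nonneg z y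

lemma dE_le {a : EuclideanSpace ℂ (Fin n)} (ha : a ∈ E)
    (z : EuclideanSpace ℂ (Fin n)) : dE E z ≤ dNI z a :=
  csInf_le (bddBelow_dNI z) ⟨a, ha, rfl⟩

lemma dNI_le_two {a z : EuclideanSpace ℂ (Fin n)} (ha : ‖a‖ = 1) (hz : ‖z‖ = 1) :
    dNI z a ≤ 2 := by
  have h : ‖(inner ℂ a z : ℂ)‖ ≤ ‖a‖ * ‖z‖ := norm_inner_le_norm a z
  rw [ha, hz, one_mul] at h
  calc dNI z a ≤ ‖(1 : ℂ)‖ + ‖(inner ℂ a z : ℂ)‖ := by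
        simpa [dNI, sub_eq_add_neg] using norm_add_le 1 (-(inner ℂ a z : ℂ))
    _ ≤ 1 + 1 := by
        simp only [norm_one]
        exact add_le_add_right h 1
    _ = 2 := by norm_num

lemma dE_le_two (hES : E ⊆ Metric.sphere 0 1) (hEne : E.Nonempty)
    {z : EuclideanSpace ℂ (Fin n)} (hz : ‖z‖ = 1) : dE E z ≤ 2 := by
  obtain ⟨a, ha⟩ := hEne
  have hna : ‖a‖ = 1 := by simpa using hES ha
  exact (dE_le ha z).trans (dNI_le_two hna hz)

lemma dNI_lip {a : EuclideanSpace ℂ (Fin n)} (ha : ‖a‖ = 1)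
    (z w : EuclideanSpace ℂ (Fin n)) : dNI z a ≤ dNI w a + ‖z - w‖ := by
  have h1 : dNI z a - dNI w a ≤ ‖(1 - (inner ℂ a z : ℂ)) - (1 - (inner ℂ a w : ℂ))‖ := by
    simpa only [dNI] using
      norm_sub_norm_le (1 - (inner ℂ a z : ℂ)) (1 - (inner ℂ a w : ℂ))
  have h2 : (1 - (inner ℂ a z : ℂ)) - (1 - (inner ℂ a w : ℂ)) = inner ℂ a (w - z) := by
    rw [inner_sub_right]; ring
  have h3 : ‖(inner ℂ a (w - z) : ℂ)‖ ≤ ‖a‖ * ‖w - z‖ := norm_inner_le_norm a (w - z)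
  rw [ha, one_mul] at h3
  have h4 : ‖w - z‖ = ‖z - w‖ := norm_sub_rev w z
  have h5 : dNI z a - dNI w a ≤ ‖z - w‖ := by
    rw [h2] at h1
    exact h1.trans (h4 ▸ h3)
  linarith

lemma dE_lip (hES : E ⊆ Metric.sphere 0 1) (hEne : E.Nonempty)
    (z w : EuclideanSpace ℂ (Fin n)) : dE E z ≤ dE E w + ‖z - w‖ := by
  have key : dE E z - ‖z - w‖ ≤ sInf (dNI w '' E) := by
    apply le_csInf (hEne.image _)
    rintro b ⟨a, ha, rfl⟩
    have hna : ‖a‖ = 1 := by simpa using hES ha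
    have := (dE_le ha z).trans (dNI_lip hna z w)
    linarith
  have h2 : dE E w = sInf (dNI w '' E) := rfl
  rw [h2]; linarith

lemma dE_continuous (hES : E ⊆ Metric.sphere 0 1) (hEne : E.Nonempty) :
    Continuous (dE E) := by
  apply (LipschitzWith.of_dist_le_mul (K := 1) (f := dE E) ?_).continuous
  intro z w
  rw [Real.dist_eq, NNReal.coe_one, one_mul, dist_eq_norm]
  have h1 := dE_lip hES hEne z w
  have h2 := dE_lip hES hEne w z
  rw [norm_sub_rev] at h2
  rw [abs_le]; constructor <;> linarith

end aux

theorem sigma_implies_log_integral_bound (n : ℕ)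
    [MeasurableSpace (EuclideanSpace ℂ (Fin n))]
    [BorelSpace (EuclideanSpace ℂ (Fin n))]
    (E : Set (EuclideanSpace ℂ (Fin n)))
    (hEclosed : IsClosed E) (hES : E ⊆ Metric.sphere 0 1) (hEne : E.Nonempty)
    (σ : Measure (EuclideanSpace ℂ (Fin n)))
    (c₀ C₀ : ℝ) (hc₀ : 0 < c₀) (hC₀ : 0 < C₀)
    (hσlow : ∀ x : EuclideanSpace ℂ (Fin n), ‖x‖ = 1 → ∀ r : ℝ, 0 < r → r ≤ 1 →
      ENNReal.ofReal (c₀ * r ^ (n : ℝ)) ≤ σ (Sball x r))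
    (hσup : ∀ x : EuclideanSpace ℂ (Fin n), ‖x‖ = 1 → ∀ r : ℝ, 0 < r →
      σ (Sball x r) ≤ ENNReal.ofReal (C₀ * r ^ (n : ℝ)))
    (s C : ℝ) (hs : s < n) (hC : 0 < C)
    (hSig : ∀ x : EuclideanSpace ℂ (Fin n), ‖x‖ = 1 → ∀ R ε : ℝ, 0 < ε → ε < R →
      σ (Sball x R ∩ {z | ‖z‖ = 1 ∧ dE E z < ε}) ≤
        ENNReal.ofReal (C * R ^ s * ε ^ ((n : ℝ) - s))) :
    ∃ C' > 0, ∀ x : EuclideanSpace ℂ (Fin n), ‖x‖ = 1 → ∀ R : ℝ, 0 < R → R ≤ 1 →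
      ∫ z in Sball x R, Real.log (1 / dE E z) ∂σ ≤
        (σ (Sball x R)).toReal * Real.log (1 / R) + C' * R ^ (n : ℝ) := by
  have ha : (0 : ℝ) < (n : ℝ) - s := sub_pos.mpr hs
  refine ⟨C / ((n : ℝ) - s), div_pos hC ha, ?_⟩
  intro x hx R hR hR1
  set B := Sball x R with hB
  have hdE_cont : Continuous (dE E) := dE_continuous hES hEne
  have hdE_meas : Measurable (dE E) := hdE_cont.measurable
  have hdNIx : Continuous fun z : EuclideanSpace ℂ (Fin n) => dNI x z :=
    continuous_norm.comp (continuous_const.sub (continuous_id.inner continuous_const))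
  have hBmeas : MeasurableSet B := by
    have hBeq : B = {z : EuclideanSpace ℂ (Fin n) | ‖z‖ = 1} ∩ {z | dNI x z < R} := rfl
    rw [hBeq]
    exact ((isClosed_eq continuous_norm continuous_const).measurableSet).inter
      (isOpen_lt hdNIx continuous_const).measurableSet
  set μ := σ.restrict B with hμ
  have hσB : σ B < ⊤ := (hσup x hx R hR).trans_lt ENNReal.ofReal_lt_top
  haveI : IsFiniteMeasure μ := ⟨by rw [hμ, Measure.restrict_apply_univ]; exact hσB⟩
  set g : EuclideanSpace ℂ (Fin n) → ℝ := fun z => max 0 (Real.log (R / dE E z)) with hg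
  have hgnn : ∀ z, 0 ≤ g z := fun z => le_max_left _ _
  have hgmeas : Measurable g :=
    measurable_const.max (Real.measurable_log.comp (measurable_const.div hdE_meas))
  have hlayer : ∫⁻ z, ENNReal.ofReal (g z) ∂μ = ∫⁻ t in Set.Ioi (0:ℝ), μ {z | t < g z} :=
    lintegral_eq_lintegral_meas_lt μ (Filter.Eventually.of_forall hgnn) hgmeas.aemeasurable
  have hmeas_bound : ∀ t ∈ Set.Ioi (0:ℝ),
      μ {z | t < g z} ≤ ENNReal.ofReal (C * R ^ (n:ℝ) * Real.exp (-((n:ℝ) - s) * t)) := by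
    intro t ht
    rw [Set.mem_Ioi] at ht
    have hsub : {z | t < g z} ∩ B ⊆ B ∩ {z | ‖z‖ = 1 ∧ dE E z < R * Real.exp (-t)} := by
      rintro z ⟨hzg, hzB⟩
      refine ⟨hzB, hzB.1, ?_⟩
      have hzg' : t < g z := hzg
      have hlog : t < Real.log (R / dE E z) := by
        rcases lt_max_iff.mp hzg' with h | h
        · linarith
        · exact h
      have hdpos : 0 < dE E z := by
        rcases (dE_nonneg (E := E) z).lt_or_eq with h | h
        · exact h
        · exfalso; rw [← h, div_zero, Real.log_zero] at hlog; linarith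
      have hRd : Real.exp t < R / dE E z := by
        have h0 : (0:ℝ) < R / dE E z := by positivity
        exact (Real.lt_log_iff_exp_lt h0).mp hlog
      have h5 : Real.exp t * dE E z < R := (lt_div_iff₀ hdpos).mp hRd
      rw [Real.exp_neg, ← div_eq_mul_inv, lt_div_iff₀ (Real.exp_pos t), mul_comm]
      exact h5
    have heps : 0 < R * Real.exp (-t) := by positivity
    have hepsR : R * Real.exp (-t) < R := by
      nth_rewrite 2 [← mul_one R]
      exact mul_lt_mul_of_pos_left (Real.exp_lt_one_iff.mpr (by linarith)) hR
    calc μ {z | t < g z} = σ ({z | t < g z} ∩ B) := by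
          rw [hμ, Measure.restrict_apply (measurableSet_lt measurable_const hgmeas)]
      _ ≤ σ (B ∩ {z | ‖z‖ = 1 ∧ dE E z < R * Real.exp (-t)}) := measure_mono hsub
      _ ≤ ENNReal.ofReal (C * R ^ s * (R * Real.exp (-t)) ^ ((n:ℝ) - s)) :=
          hSig x hx R _ heps hepsR
      _ = ENNReal.ofReal (C * R ^ (n:ℝ) * Real.exp (-((n:ℝ) - s) * t)) := by
          congr 1
          rw [Real.mul_rpow hR.le (Real.exp_pos _).le, ← Real.exp_mul]
          rw [show (n:ℝ) = s + ((n:ℝ) - s) by ring, Real.rpow_add hR]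
          ring_nf
  have hexp_int : IntegrableOn
      (fun t : ℝ => C * R ^ (n:ℝ) * Real.exp (-((n:ℝ) - s) * t)) (Set.Ioi (0:ℝ)) :=
    (exp_neg_integrableOn_Ioi 0 ha).const_mul _
  have hexp_val : ∫ t in Set.Ioi (0:ℝ), Real.exp (-((n:ℝ) - s) * t) = ((n:ℝ) - s)⁻¹ := by
    have h := integral_comp_mul_left_Ioi (fun u => Real.exp (-u)) 0 ha
    simp only [mul_zero, integral_exp_neg_Ioi, neg_zero, Real.exp_zero, smul_eq_mul,
      mul_one] at h
    simp only [neg_mul]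
    exact h
  have htail : ∫⁻ t in Set.Ioi (0:ℝ), μ {z | t < g z}
      ≤ ENNReal.ofReal (C * R ^ (n:ℝ) * ((n:ℝ) - s)⁻¹) := by
    calc ∫⁻ t in Set.Ioi (0:ℝ), μ {z | t < g z}
        ≤ ∫⁻ t in Set.Ioi (0:ℝ),
            ENNReal.ofReal (C * R ^ (n:ℝ) * Real.exp (-((n:ℝ) - s) * t)) :=
          setLIntegral_mono (by fun_prop) hmeas_bound
      _ = ENNReal.ofReal (∫ t in Set.Ioi (0:ℝ), C * R ^ (n:ℝ) * Real.exp (-((n:ℝ) - s) * t)) :=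
          (ofReal_integral_eq_lintegral_ofReal hexp_int
            (Filter.Eventually.of_forall fun t => by positivity)).symm
      _ = ENNReal.ofReal (C * R ^ (n:ℝ) * ((n:ℝ) - s)⁻¹) := by
          rw [integral_const_mul, hexp_val]
  have hIg : ∫⁻ z, ENNReal.ofReal (g z) ∂μ ≤ ENNReal.ofReal (C * R ^ (n:ℝ) * ((n:ℝ) - s)⁻¹) :=
    hlayer ▸ htail
  have hg_int : Integrable g μ := by
    refine ⟨hgmeas.aestronglyMeasurable, ?_⟩
    rw [hasFiniteIntegral_iff_ofReal (Filter.Eventually.of_forall hgnn)]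
    exact hIg.trans_lt ENNReal.ofReal_lt_top
  have hg_val : ∫ z, g z ∂μ ≤ C * R ^ (n:ℝ) * ((n:ℝ) - s)⁻¹ := by
    rw [integral_eq_lintegral_of_nonneg_ae (Filter.Eventually.of_forall hgnn)
      hgmeas.aestronglyMeasurable]
    have h := ENNReal.toReal_mono ENNReal.ofReal_ne_top hIg
    rwa [ENNReal.toReal_ofReal (by positivity)] at h
  set f : EuclideanSpace ℂ (Fin n) → ℝ := fun z => Real.log (1 / dE E z) with hf
  have hfmeas : Measurable f := Real.measurable_log.comp (measurable_const.div hdE_meas)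
  have hlogR : 0 ≤ Real.log (1 / R) := by
    rw [one_div, Real.log_inv]
    have := Real.log_nonpos hR.le hR1
    linarith
  have hpt : ∀ z ∈ B, f z ≤ Real.log (1 / R) + g z := by
    intro z hz
    rcases (dE_nonneg (E := E) z).lt_or_eq with hd | hd
    · have hfz : f z = Real.log (1 / R) + Real.log (R / dE E z) := by
        simp only [hf, one_div, Real.log_inv,
          Real.log_div (ne_of_gt hR) (ne_of_gt hd)]
        ring
      rw [hfz]
      exact add_le_add_right (le_max_right _ _) _
    · have hfz : f z = 0 := by simp [hf, ← hd]
      rw [hfz]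
      exact add_nonneg hlogR (hgnn z)
  have hlow : ∀ z ∈ B, -Real.log 2 ≤ f z := by
    intro z hz
    have hd2 : dE E z ≤ 2 := dE_le_two hES hEne hz.1
    have hle : Real.log (dE E z) ≤ Real.log 2 := by
      rcases (dE_nonneg (E := E) z).lt_or_eq with hd | hd
      · exact Real.log_le_log hd hd2
      · rw [← hd, Real.log_zero]
        exact Real.log_nonneg one_le_two
    simp only [hf, one_div, Real.log_inv]
    linarith
  have hlog2 : (0:ℝ) ≤ Real.log 2 := Real.log_nonneg one_le_two
  have hf_int : Integrable f μ := by
    apply Integrable.mono'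
      ((integrable_const (Real.log 2 + Real.log (1 / R))).add hg_int)
      hfmeas.aestronglyMeasurable
    filter_upwards [ae_restrict_mem hBmeas] with z hz
    rw [Real.norm_eq_abs, abs_le]
    refine ⟨?_, ?_⟩
    · have h1 := hlow z hz
      have h2 := hgnn z
      simp only [Pi.add_apply]
      linarith
    · have h1 := hpt z hz
      simp only [Pi.add_apply]
      linarith
  calc ∫ z in B, Real.log (1 / dE E z) ∂σ
      ≤ ∫ z, (Real.log (1 / R) + g z) ∂μ := by
        apply integral_mono_ae hf_int ((integrable_const _).add hg_int)
        filter_upwards [ae_restrict_mem hBmeas] with z hz using hpt z hz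
    _ = (σ B).toReal * Real.log (1 / R) + ∫ z, g z ∂μ := by
        rw [integral_add (integrable_const _) hg_int, integral_const, smul_eq_mul,
          hμ, measureReal_def, Measure.restrict_apply_univ]
    _ ≤ (σ B).toReal * Real.log (1 / R) + C / ((n:ℝ) - s) * R ^ (n:ℝ) := by
        have heq : C * R ^ (n:ℝ) * ((n:ℝ) - s)⁻¹ = C / ((n:ℝ) - s) * R ^ (n:ℝ) := by
          ring
        linarith [heq ▸ hg_val]
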